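/- Let p be a prime and k a commutative ring with p·1 = 0, and let W = W_d(k) be the d-th Weyl algebra over k (d ≥ 1). Let R ⊆ W be the k-subalgebra generated by t_1, …, t_d. Then the centralizer A := Z_W(R) = { x ∈ W : x·r = r·x for all r ∈ R } equals the k-subalgebra of W generated by t_1, …, t_d, ∂_1^p, …, ∂_d^p, and W is a free left A-module of rank p^d with basis the monomials ∂^J = ∂_1^{j_1}⋯∂_d^{j_d}, where each j_r ranges over {0, 1, …, p−1}. -/

import Mathlib

noncomputable section

/-- The defining relations of the `d`-th Weyl algebra: `t_i t_j = t_j t_i`,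
`∂_i ∂_j = ∂_j ∂_i` and `∂_i t_j = t_j ∂_i + δ_{ij}`. -/
inductive WeylRel (k : Type*) [CommRing k] (d : ℕ) :
    FreeAlgebra k (Fin d ⊕ Fin d) → FreeAlgebra k (Fin d ⊕ Fin d) → Prop
  | tt (i j : Fin d) :
      WeylRel k d (FreeAlgebra.ι k (Sum.inl i) * FreeAlgebra.ι k (Sum.inl j))
        (FreeAlgebra.ι k (Sum.inl j) * FreeAlgebra.ι k (Sum.inl i))
  | dd (i j : Fin d) :
      WeylRel k d (FreeAlgebra.ι k (Sum.inr i) * FreeAlgebra.ι k (Sum.inr j))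
        (FreeAlgebra.ι k (Sum.inr j) * FreeAlgebra.ι k (Sum.inr i))
  | dt (i j : Fin d) :
      WeylRel k d (FreeAlgebra.ι k (Sum.inr i) * FreeAlgebra.ι k (Sum.inl j))
        (FreeAlgebra.ι k (Sum.inl j) * FreeAlgebra.ι k (Sum.inr i) + if i = j then 1 else 0)

/-- The `d`-th Weyl algebra over `k`: the free algebra on `t_1,…,t_d,∂_1,…,∂_d` modulo the
two-sided ideal generated by the Weyl relations. -/
abbrev WeylAlgebra (k : Type*) [CommRing k] (d : ℕ) := RingQuot (WeylRel k d)

namespace WeylAlgebra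

variable (k : Type*) [CommRing k] (d : ℕ)

/-- The generator `t_i` of the Weyl algebra. -/
def t (i : Fin d) : WeylAlgebra k d :=
  RingQuot.mkAlgHom k (WeylRel k d) (FreeAlgebra.ι k (Sum.inl i))

/-- The generator `∂_i` of the Weyl algebra. -/
def del (i : Fin d) : WeylAlgebra k d :=
  RingQuot.mkAlgHom k (WeylRel k d) (FreeAlgebra.ι k (Sum.inr i))

/-- The monomial `t^I = t_1^{i_1} ⋯ t_d^{i_d}` in the Weyl algebra. -/
def monomialT (I : Fin d → ℕ) : WeylAlgebra k d :=
  ((List.finRange d).map fun i => t k d i ^ I i).prod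

/-- The monomial `∂^J = ∂_1^{j_1} ⋯ ∂_d^{j_d}` in the Weyl algebra. -/
def monomialD (J : Fin d → ℕ) : WeylAlgebra k d :=
  ((List.finRange d).map fun i => del k d i ^ J i).prod

end WeylAlgebra



section ListLemmas

variable {M : Type*} [Semiring M] {ι : Type*} [DecidableEq ι]

lemma map_update_of_not_mem (f : ι → M) {i : ι} (y : M) {L : List ι} (h : i ∉ L) :
    L.map (Function.update f i y) = L.map f :=
  List.map_congr_left fun x hx => Function.update_of_ne (fun e => h (by subst e; exact hx)) _ _

lemma prod_map_mul_right {f : ι → M} {L : List ι} (hL : L.Nodup) {i : ι} (hi : i ∈ L)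
    (x : M) (hc : ∀ j ∈ L, j ≠ i → Commute x (f j)) :
    (L.map f).prod * x = (L.map (Function.update f i (f i * x))).prod := by
  induction L with
  | nil => cases hi
  | cons a L ih =>
    rcases List.nodup_cons.1 hL with ⟨ha, hL'⟩
    rcases List.mem_cons.1 hi with rfl | hi'
    · rw [List.map_cons, List.map_cons, List.prod_cons, List.prod_cons,
        Function.update_self, map_update_of_not_mem _ _ ha, mul_assoc]
      have : Commute x (L.map f).prod := by
        refine Commute.list_prod_right _ x fun y hy => ?_
        obtain ⟨j, hj, rfl⟩ := List.mem_map.1 hy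
        exact hc j (List.mem_cons_of_mem _ hj) (fun e => ha (by subst e; exact hj))
      rw [← this.eq, ← mul_assoc]
    · have hai : a ≠ i := fun e => ha (by rw [e]; exact hi')
      rw [List.map_cons, List.map_cons, List.prod_cons, List.prod_cons, mul_assoc,
        ih hL' hi' (fun j hj hji => hc j (List.mem_cons_of_mem _ hj) hji),
        Function.update_of_ne hai]

lemma prod_map_mul_left {f : ι → M} {L : List ι} (hL : L.Nodup) {i : ι} (hi : i ∈ L)
    (x : M) (hc : ∀ j ∈ L, j ≠ i → Commute x (f j)) :
    x * (L.map f).prod = (L.map (Function.update f i (x * f i))).prod := by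
  induction L with
  | nil => cases hi
  | cons a L ih =>
    rcases List.nodup_cons.1 hL with ⟨ha, hL'⟩
    rcases List.mem_cons.1 hi with rfl | hi'
    · rw [List.map_cons, List.map_cons, List.prod_cons, List.prod_cons,
        Function.update_self, map_update_of_not_mem _ _ ha, ← mul_assoc]
    · have hai : a ≠ i := fun e => ha (by rw [e]; exact hi')
      rw [List.map_cons, List.map_cons, List.prod_cons, List.prod_cons,
        Function.update_of_ne hai, ← mul_assoc,
        (hc a (List.mem_cons_self) hai).eq, mul_assoc,
        ih hL' hi' (fun j hj hji => hc j (List.mem_cons_of_mem _ hj) hji)]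

lemma prod_map_update_add {f : ι → M} {L : List ι} (hL : L.Nodup) {i : ι} (hi : i ∈ L)
    (y z : M) :
    (L.map (Function.update f i (y + z))).prod =
      (L.map (Function.update f i y)).prod + (L.map (Function.update f i z)).prod := by
  induction L with
  | nil => cases hi
  | cons a L ih =>
    rcases List.nodup_cons.1 hL with ⟨ha, hL'⟩
    rcases List.mem_cons.1 hi with rfl | hi'
    · rw [List.map_cons, List.map_cons, List.map_cons, List.prod_cons, List.prod_cons,
        List.prod_cons, Function.update_self, Function.update_self, Function.update_self,
        map_update_of_not_mem _ _ ha, map_update_of_not_mem _ _ ha,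
        map_update_of_not_mem _ _ ha, add_mul]
    · have hai : a ≠ i := fun e => ha (by rw [e]; exact hi')
      rw [List.map_cons, List.map_cons, List.map_cons, List.prod_cons, List.prod_cons,
        List.prod_cons, Function.update_of_ne hai, Function.update_of_ne hai,
        Function.update_of_ne hai, ih hL' hi', mul_add]

lemma prod_map_update_nsmul {f : ι → M} {L : List ι} (hL : L.Nodup) {i : ι} (hi : i ∈ L)
    (n : ℕ) (y : M) :
    (L.map (Function.update f i (n • y))).prod = n • (L.map (Function.update f i y)).prod := by
  induction L with
  | nil => cases hi
  | cons a L ih =>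
    rcases List.nodup_cons.1 hL with ⟨ha, hL'⟩
    rcases List.mem_cons.1 hi with rfl | hi'
    · rw [List.map_cons, List.map_cons, List.prod_cons, List.prod_cons,
        Function.update_self, Function.update_self,
        map_update_of_not_mem _ _ ha, map_update_of_not_mem _ _ ha, smul_mul_assoc]
    · have hai : a ≠ i := fun e => ha (by rw [e]; exact hi')
      rw [List.map_cons, List.map_cons, List.prod_cons, List.prod_cons,
        Function.update_of_ne hai, Function.update_of_ne hai, ih hL' hi', mul_smul_comm]

lemma prod_map_eq_single {L : List ι} {i : ι} (hi : i ∈ L) (hL : L.Nodup)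
    (f : ι → M) (h1 : ∀ j ∈ L, j ≠ i → f j = 1) :
    (L.map f).prod = f i := by
  induction L with
  | nil => cases hi
  | cons a L ih =>
    rcases List.nodup_cons.1 hL with ⟨ha, hL'⟩
    rcases List.mem_cons.1 hi with rfl | hi'
    · rw [List.map_cons, List.prod_cons, List.prod_eq_one, mul_one]
      intro y hy
      obtain ⟨j, hj, rfl⟩ := List.mem_map.1 hy
      exact h1 j (List.mem_cons_of_mem _ hj) (fun e => ha (by subst e; exact hj))
    · have hai : a ≠ i := fun e => ha (by rw [e]; exact hi')
      rw [List.map_cons, List.prod_cons, h1 a (List.mem_cons_self) hai, one_mul,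
        ih hi' hL' (fun j hj hji => h1 j (List.mem_cons_of_mem _ hj) hji)]

lemma prod_map_mul_prod_map (f g : ι → M) {L : List ι} (hL : L.Nodup)
    (hc : ∀ a ∈ L, ∀ b ∈ L, a ≠ b → Commute (g a) (f b)) :
    (L.map f).prod * (L.map g).prod = (L.map fun r => f r * g r).prod := by
  induction L with
  | nil => simp
  | cons a L ih =>
    rcases List.nodup_cons.1 hL with ⟨ha, hL'⟩
    have hcomm : Commute (g a) (L.map f).prod := by
      refine Commute.list_prod_right _ _ fun y hy => ?_
      obtain ⟨j, hj, rfl⟩ := List.mem_map.1 hy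
      exact hc a (List.mem_cons_self) j (List.mem_cons_of_mem _ hj)
        (fun e => ha (by subst e; exact hj))
    rw [List.map_cons, List.map_cons, List.map_cons, List.prod_cons, List.prod_cons,
      List.prod_cons, mul_assoc, ← mul_assoc ((L.map f).prod), ← hcomm.eq,
      mul_assoc, ← ih hL' (fun x hx b hb => hc x (List.mem_cons_of_mem _ hx) b
        (List.mem_cons_of_mem _ hb)), ← mul_assoc]

end ListLemmas
namespace WeylAlgebra

variable {k : Type*} [CommRing k] {d : ℕ}

lemma t_mul_t (i j : Fin d) : t k d i * t k d j = t k d j * t k d i := by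
  simpa only [map_mul, t] using RingQuot.mkAlgHom_rel k (WeylRel.tt i j)

lemma del_mul_del (i j : Fin d) : del k d i * del k d j = del k d j * del k d i := by
  simpa only [map_mul, del] using RingQuot.mkAlgHom_rel k (WeylRel.dd i j)

lemma commute_t_t (i j : Fin d) : Commute (t k d i) (t k d j) := t_mul_t i j

lemma commute_del_del (i j : Fin d) : Commute (del k d i) (del k d j) := del_mul_del i j

lemma del_mul_t (i j : Fin d) :
    del k d i * t k d j = t k d j * del k d i + if i = j then 1 else 0 := by
  have h := RingQuot.mkAlgHom_rel k (WeylRel.dt (k := k) (d := d) i j)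
  simp only [map_add, map_mul] at h
  rw [t, del, h]
  congr 1
  split <;> simp

lemma commute_del_t {i j : Fin d} (h : i ≠ j) : Commute (del k d i) (t k d j) := by
  have := del_mul_t (k := k) (d := d) i j
  rw [if_neg h, add_zero] at this
  exact this

lemma del_t_self (i : Fin d) : del k d i * t k d i = t k d i * del k d i + 1 := by
  simpa using del_mul_t (k := k) (d := d) i i

lemma del_pow_mul_t (i : Fin d) (n : ℕ) :
    del k d i ^ n * t k d i = t k d i * del k d i ^ n + n • del k d i ^ (n - 1) := by
  induction n with
  | zero => simp
  | succ m ih =>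
    have h1 : m • del k d i ^ (m - 1) * del k d i = m • del k d i ^ m := by
      cases m with
      | zero => simp
      | succ l => rw [smul_mul_assoc, Nat.succ_sub_one, ← pow_succ]
    calc del k d i ^ (m + 1) * t k d i
        = del k d i ^ m * (del k d i * t k d i) := by rw [pow_succ, mul_assoc]
      _ = del k d i ^ m * t k d i * del k d i + del k d i ^ m := by
            rw [del_t_self, mul_add, mul_one, ← mul_assoc]
      _ = t k d i * del k d i ^ m * del k d i + m • del k d i ^ (m - 1) * del k d i
            + del k d i ^ m := by rw [ih, add_mul]
      _ = t k d i * del k d i ^ (m + 1) + (m + 1) • del k d i ^ (m + 1 - 1) := by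
            rw [h1, mul_assoc, ← pow_succ, Nat.succ_sub_one, succ_nsmul]
            abel

lemma commute_del_pow_p_t {p : ℕ} (hchar : (p : k) = 0) (i j : Fin d) :
    Commute (del k d i ^ p) (t k d j) := by
  rcases eq_or_ne i j with rfl | h
  · show _ = _
    rw [del_pow_mul_t, ← Nat.cast_smul_eq_nsmul k, hchar, zero_smul, add_zero]
  · exact (commute_del_t h).pow_left p

lemma update_pow {M : Type*} [Monoid M] (g : Fin d → M) (J : Fin d → ℕ) (i : Fin d) (m : ℕ) :
    Function.update (fun r => g r ^ J r) i (g i ^ m) =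
      fun r => g r ^ (Function.update J i m r) := by
  funext r
  rcases eq_or_ne r i with rfl | h
  · simp
  · rw [Function.update_of_ne h, Function.update_of_ne h]

lemma monomialT_mul_t (I : Fin d → ℕ) (i : Fin d) :
    monomialT k d I * t k d i = monomialT k d (Function.update I i (I i + 1)) := by
  rw [monomialT, monomialT,
    prod_map_mul_right (List.nodup_finRange d) (List.mem_finRange i) (t k d i)
      (fun j _ hji => ((commute_t_t i j).pow_right _))]
  congr 1
  rw [show (fun r => t k d r ^ I r) i * t k d i = t k d i ^ (I i + 1) by rw [pow_succ],
    update_pow]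

lemma monomialD_mul_del (J : Fin d → ℕ) (i : Fin d) :
    monomialD k d J * del k d i = monomialD k d (Function.update J i (J i + 1)) := by
  rw [monomialD, monomialD,
    prod_map_mul_right (List.nodup_finRange d) (List.mem_finRange i) (del k d i)
      (fun j _ hji => ((commute_del_del i j).pow_right _))]
  congr 1
  rw [show (fun r => del k d r ^ J r) i * del k d i = del k d i ^ (J i + 1) by rw [pow_succ],
    update_pow]

lemma t_mul_monomialD (J : Fin d → ℕ) (i : Fin d) :
    t k d i * monomialD k d J =
      ((List.finRange d).map (Function.update (fun r => del k d r ^ J r) i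
        (t k d i * del k d i ^ J i))).prod := by
  rw [monomialD, prod_map_mul_left (List.nodup_finRange d) (List.mem_finRange i) (t k d i)
      (fun j _ hji => ((commute_del_t hji).symm.pow_right _))]

lemma monomialD_mul_t (J : Fin d → ℕ) (i : Fin d) :
    monomialD k d J * t k d i =
      t k d i * monomialD k d J + (J i) • monomialD k d (Function.update J i (J i - 1)) := by
  have key := prod_map_mul_right (f := fun r => del k d r ^ J r)
    (List.nodup_finRange d) (List.mem_finRange i) (t k d i)
    (fun j _ hji => ((commute_del_t hji).symm.pow_right _))
  rw [show (fun r => del k d r ^ J r) i * t k d i =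
      t k d i * del k d i ^ J i + (J i) • del k d i ^ (J i - 1) from del_pow_mul_t i (J i),
    prod_map_update_add (List.nodup_finRange d) (List.mem_finRange i),
    prod_map_update_nsmul (List.nodup_finRange d) (List.mem_finRange i), update_pow] at key
  rw [monomialD, key, ← t_mul_monomialD]
  rfl

lemma monomialT_mul_monomialT (I I' : Fin d → ℕ) :
    monomialT k d I * monomialT k d I' = monomialT k d (I + I') := by
  rw [monomialT, monomialT, monomialT,
    prod_map_mul_prod_map _ _ (List.nodup_finRange d)
      (fun a _ b _ hab => ((commute_t_t a b).pow_pow _ _))]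
  exact congrArg List.prod (List.map_congr_left fun r _ => by rw [Pi.add_apply, pow_add])

lemma monomialD_mul_monomialD (J J' : Fin d → ℕ) :
    monomialD k d J * monomialD k d J' = monomialD k d (J + J') := by
  rw [monomialD, monomialD, monomialD,
    prod_map_mul_prod_map _ _ (List.nodup_finRange d)
      (fun a _ b _ hab => ((commute_del_del a b).pow_pow _ _))]
  exact congrArg List.prod (List.map_congr_left fun r _ => by rw [Pi.add_apply, pow_add])

lemma monomialT_zero : monomialT k d 0 = 1 := by
  rw [monomialT, List.prod_eq_one]
  intro y hy
  obtain ⟨j, _, rfl⟩ := List.mem_map.1 hy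
  simp

lemma monomialD_zero : monomialD k d 0 = 1 := by
  rw [monomialD, List.prod_eq_one]
  intro y hy
  obtain ⟨j, _, rfl⟩ := List.mem_map.1 hy
  simp

lemma monomialT_single (i : Fin d) (n : ℕ) :
    monomialT k d (Pi.single i n) = t k d i ^ n := by
  rw [monomialT, prod_map_eq_single (List.mem_finRange i) (List.nodup_finRange d)]
  · rw [Pi.single_eq_same]
  · intro j _ hji
    rw [Pi.single_eq_of_ne hji, pow_zero]

lemma monomialD_single (i : Fin d) (n : ℕ) :
    monomialD k d (Pi.single i n) = del k d i ^ n := by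
  rw [monomialD, prod_map_eq_single (List.mem_finRange i) (List.nodup_finRange d)]
  · rw [Pi.single_eq_same]
  · intro j _ hji
    rw [Pi.single_eq_of_ne hji, pow_zero]

lemma commute_monomialDp_t {p : ℕ} (hchar : (p : k) = 0) (Q : Fin d → ℕ) (j : Fin d) :
    Commute (monomialD k d (p • Q)) (t k d j) := by
  rw [monomialD]
  refine Commute.list_prod_left _ _ fun y hy => ?_
  obtain ⟨r, _, rfl⟩ := List.mem_map.1 hy
  have : del k d r ^ (p • Q) r = (del k d r ^ p) ^ Q r := by
    rw [Pi.smul_apply, smul_eq_mul, pow_mul]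
  rw [this]
  exact (commute_del_pow_p_t hchar r j).pow_left _

end WeylAlgebra
namespace WeylAlgebra

open MvPolynomial

variable {k : Type*} [CommRing k] {d : ℕ}

/-- The polynomial model on which the Weyl algebra acts faithfully. -/
abbrev Poly (k : Type*) [CommRing k] (d : ℕ) := MvPolynomial (Fin d ⊕ Fin d) k

/-- multiplication by `x_i`. -/
def TT (i : Fin d) : Module.End k (Poly k d) := LinearMap.mulLeft k (X (Sum.inl i))

/-- `∂/∂x_i + multiplication by y_i`. -/
def DD (i : Fin d) : Module.End k (Poly k d) :=
  (pderiv (Sum.inl i)).toLinearMap + LinearMap.mulLeft k (X (Sum.inr i))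

lemma pderiv_pderiv_comm {σ : Type*} (i j : σ) (f : MvPolynomial σ k) :
    pderiv i (pderiv j f) = pderiv j (pderiv i f) := by
  induction f using MvPolynomial.induction_on with
  | C a => simp
  | add f g hf hg => simp [hf, hg]
  | mul_X f n hf =>
    classical
    simp only [pderiv_mul, map_add, hf, pderiv_X]
    have e : ∀ a b : σ, (pderiv a) ((Pi.single b 1 : σ → MvPolynomial σ k) n) = 0 := by
      intro a b
      rcases eq_or_ne n b with rfl | h
      · rw [Pi.single_eq_same]; exact pderiv_one
      · rw [Pi.single_eq_of_ne h]; exact map_zero _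
    rw [e, e]
    ring

lemma weylRel_lift {a b : FreeAlgebra k (Fin d ⊕ Fin d)} (h : WeylRel k d a b) :
    FreeAlgebra.lift k (Sum.elim (TT (k := k) (d := d)) DD) a =
      FreeAlgebra.lift k (Sum.elim TT DD) b := by
  induction h with
  | tt i j =>
    simp only [map_mul, FreeAlgebra.lift_ι_apply, Sum.elim_inl]
    refine LinearMap.ext fun f => ?_
    simp only [Module.End.mul_apply, TT, LinearMap.mulLeft_apply]
    ring
  | dd i j =>
    simp only [map_mul, FreeAlgebra.lift_ι_apply, Sum.elim_inr]
    refine LinearMap.ext fun f => ?_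
    simp only [Module.End.mul_apply, DD, LinearMap.add_apply, LinearMap.mulLeft_apply,
      Derivation.coeFn_coe, map_add]
    rw [pderiv_pderiv_comm]
    have h1 : pderiv (Sum.inl i) (X (Sum.inr j) * f)
        = X (Sum.inr j) * pderiv (Sum.inl i) f := by
      rw [pderiv_mul, pderiv_X_of_ne (by simp), zero_mul, zero_add]
    have h2 : pderiv (Sum.inl j) (X (Sum.inr i) * f)
        = X (Sum.inr i) * pderiv (Sum.inl j) f := by
      rw [pderiv_mul, pderiv_X_of_ne (by simp), zero_mul, zero_add]
    rw [h1, h2]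
    ring
  | dt i j =>
    simp only [map_mul, map_add, FreeAlgebra.lift_ι_apply, Sum.elim_inl, Sum.elim_inr]
    have hite : (FreeAlgebra.lift k (Sum.elim (TT (k := k) (d := d)) DD))
        (if i = j then 1 else 0) = if i = j then 1 else 0 := by
      split <;> simp
    rw [hite]
    refine LinearMap.ext fun f => ?_
    simp only [Module.End.mul_apply, LinearMap.add_apply, TT, DD, LinearMap.mulLeft_apply,
      Derivation.coeFn_coe, map_add]
    have h1 : pderiv (Sum.inl i) (X (Sum.inl j) * f)
        = (if i = j then 1 else 0) * f + X (Sum.inl j) * pderiv (Sum.inl i) f := by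
      classical
      rw [pderiv_mul, pderiv_X]
      rcases eq_or_ne i j with rfl | h
      · simp [Pi.single_eq_same]
      · rw [if_neg h, Pi.single_eq_of_ne
            (show (Sum.inl j : Fin d ⊕ Fin d) ≠ Sum.inl i from by simpa using Ne.symm h),
          zero_mul]
    rw [h1]
    split <;> · simp only [Module.End.one_apply, LinearMap.zero_apply]; ring

/-- The representation of the Weyl algebra on polynomials. -/
def rho : WeylAlgebra k d →ₐ[k] Module.End k (Poly k d) :=
  RingQuot.liftAlgHom k ⟨FreeAlgebra.lift k (Sum.elim TT DD), fun _ _ h => weylRel_lift h⟩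

lemma rho_t (i : Fin d) : rho (t k d i) = TT (k := k) i := by
  rw [t, rho, RingQuot.liftAlgHom_mkAlgHom_apply, FreeAlgebra.lift_ι_apply, Sum.elim_inl]

lemma rho_del (i : Fin d) : rho (del k d i) = DD (k := k) i := by
  rw [del, rho, RingQuot.liftAlgHom_mkAlgHom_apply, FreeAlgebra.lift_ι_apply, Sum.elim_inr]

end WeylAlgebra
namespace WeylAlgebra

open MvPolynomial

variable {k : Type*} [CommRing k] {d : ℕ}

/-- Evaluation of the representation at the constant polynomial `1`. -/
def Phi : WeylAlgebra k d →ₗ[k] Poly k d where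
  toFun w := rho w 1
  map_add' x y := by simp only [map_add, LinearMap.add_apply]
  map_smul' c x := by simp only [map_smul, LinearMap.smul_apply, RingHom.id_apply]

lemma Phi_mul (x y : WeylAlgebra k d) : Phi (x * y) = rho x (Phi y) := by
  simp only [Phi, LinearMap.coe_mk, AddHom.coe_mk, map_mul, Module.End.mul_apply]

/-- Polynomials not involving the `x`-variables (in the sense of partial derivatives). -/
def NoX (f : Poly k d) : Prop := ∀ i : Fin d, pderiv (Sum.inl i) f = 0

lemma noX_one : NoX (1 : Poly k d) := fun _ => pderiv_one

lemma noX_Ymul {f : Poly k d} (h : NoX f) (i : Fin d) (n : ℕ) :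
    NoX (X (Sum.inr i) ^ n * f) := by
  intro j
  rw [pderiv_mul, h j, mul_zero, add_zero, pderiv_pow, pderiv_X_of_ne (by simp)]
  ring

lemma DD_apply_noX {f : Poly k d} (h : NoX f) (i : Fin d) :
    DD i f = X (Sum.inr i) * f := by
  rw [DD, LinearMap.add_apply, Derivation.coeFn_coe, h i, zero_add, LinearMap.mulLeft_apply]

lemma DD_pow_apply_noX {f : Poly k d} (h : NoX f) (i : Fin d) (n : ℕ) :
    (DD i ^ n) f = X (Sum.inr i) ^ n * f := by
  induction n with
  | zero => simp
  | succ m ih =>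
    rw [pow_succ', Module.End.mul_apply, ih, DD_apply_noX (noX_Ymul h i m), ← mul_assoc,
      ← pow_succ']

lemma noX_Yprod_mul {f : Poly k d} (h : NoX f) (J : Fin d → ℕ) (L : List (Fin d)) :
    NoX ((L.map fun r => (X (Sum.inr r) : Poly k d) ^ J r).prod * f) := by
  induction L with
  | nil => simpa using h
  | cons a L ih =>
    rw [List.map_cons, List.prod_cons, mul_assoc]
    exact noX_Ymul ih a (J a)

lemma prod_DD_apply_noX (J : Fin d → ℕ) (L : List (Fin d)) {f : Poly k d} (h : NoX f) :
    ((L.map fun r => DD (k := k) r ^ J r).prod) f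
      = (L.map fun r => (X (Sum.inr r) : Poly k d) ^ J r).prod * f := by
  induction L with
  | nil => simp
  | cons a L ih =>
    rw [List.map_cons, List.prod_cons, Module.End.mul_apply, ih,
      DD_pow_apply_noX (noX_Yprod_mul h J L) a (J a), List.map_cons, List.prod_cons,
      mul_assoc]

lemma TT_pow_apply (i : Fin d) (n : ℕ) (g : Poly k d) :
    (TT (k := k) i ^ n) g = X (Sum.inl i) ^ n * g := by
  induction n with
  | zero => simp
  | succ m ih =>
    rw [pow_succ', Module.End.mul_apply, ih, TT, LinearMap.mulLeft_apply, ← mul_assoc,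
      ← pow_succ']

lemma prod_TT_apply (I : Fin d → ℕ) (L : List (Fin d)) (g : Poly k d) :
    ((L.map fun r => TT (k := k) r ^ I r).prod) g
      = (L.map fun r => (X (Sum.inl r) : Poly k d) ^ I r).prod * g := by
  induction L with
  | nil => simp
  | cons a L ih =>
    rw [List.map_cons, List.prod_cons, Module.End.mul_apply, ih, TT_pow_apply,
      List.map_cons, List.prod_cons, mul_assoc]

lemma rho_monomialT (I : Fin d → ℕ) (g : Poly k d) :
    rho (monomialT k d I) g = (∏ r : Fin d, (X (Sum.inl r) : Poly k d) ^ I r) * g := by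
  rw [monomialT, map_list_prod]
  have : (List.map (⇑rho) (List.map (fun i => t k d i ^ I i) (List.finRange d)))
      = (List.finRange d).map fun r => TT (k := k) r ^ I r := by
    rw [List.map_map]
    exact List.map_congr_left fun r _ => by simp [map_pow, rho_t]
  rw [this, prod_TT_apply, Fin.prod_univ_def]

lemma rho_monomialD_one (J : Fin d → ℕ) :
    rho (monomialD k d J) 1 = ∏ r : Fin d, (X (Sum.inr r) : Poly k d) ^ J r := by
  rw [monomialD, map_list_prod]
  have : (List.map (⇑rho) (List.map (fun i => del k d i ^ J i) (List.finRange d)))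
      = (List.finRange d).map fun r => DD (k := k) r ^ J r := by
    rw [List.map_map]
    exact List.map_congr_left fun r _ => by simp [map_pow, rho_del]
  rw [this, prod_DD_apply_noX J _ noX_one, mul_one, Fin.prod_univ_def]

/-- The exponent finsupp of a monomial. -/
def expo (I J : Fin d → ℕ) : (Fin d ⊕ Fin d) →₀ ℕ :=
  Finsupp.equivFunOnFinite.symm (Sum.elim I J)

lemma prod_pow_eq_monomial (g : (Fin d ⊕ Fin d) → ℕ) :
    (∏ u : Fin d ⊕ Fin d, (X u : Poly k d) ^ g u)
      = monomial (Finsupp.equivFunOnFinite.symm g) 1 := by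
  classical
  rw [monomial_eq, map_one, one_mul, Finsupp.prod]
  exact (Finset.prod_subset (Finset.subset_univ _) fun x _ hx => by
    rw [show g x = 0 from Finsupp.notMem_support_iff.1 hx, pow_zero]).symm

/-- The basic monomials of the Weyl algebra. -/
def bmon (q : (Fin d → ℕ) × (Fin d → ℕ)) : WeylAlgebra k d :=
  monomialT k d q.1 * monomialD k d q.2

lemma Phi_bmon (q : (Fin d → ℕ) × (Fin d → ℕ)) :
    Phi (bmon (k := k) q) = monomial (expo q.1 q.2) 1 := by
  rw [bmon, Phi_mul, show Phi (monomialD k d q.2) = rho (monomialD k d q.2) 1 from rfl,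
    rho_monomialD_one, rho_monomialT]
  exact (Fintype.prod_sum_type (fun u => (X u : Poly k d) ^ Sum.elim q.1 q.2 u)).symm.trans
    (prod_pow_eq_monomial _)

lemma expo_injective :
    Function.Injective fun q : (Fin d → ℕ) × (Fin d → ℕ) => expo q.1 q.2 := by
  rintro ⟨I, J⟩ ⟨I', J'⟩ h
  have h2 : Sum.elim I J = Sum.elim I' J' := Finsupp.equivFunOnFinite.symm.injective h
  refine Prod.ext (funext fun r => ?_) (funext fun r => ?_)
  · exact congrFun h2 (Sum.inl r)
  · exact congrFun h2 (Sum.inr r)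

lemma li_phi_bmon : LinearIndependent k (⇑(Phi (k := k) (d := d)) ∘ bmon) := by
  have : (⇑(Phi (k := k) (d := d)) ∘ bmon)
      = fun q : (Fin d → ℕ) × (Fin d → ℕ) =>
        (MvPolynomial.basisMonomials (Fin d ⊕ Fin d) k) (expo q.1 q.2) := by
    funext q
    rw [Function.comp_apply, Phi_bmon, coe_basisMonomials]
  rw [this]
  exact (MvPolynomial.basisMonomials (Fin d ⊕ Fin d) k).linearIndependent.comp _ expo_injective

lemma linearIndependent_bmon : LinearIndependent k (bmon (k := k) (d := d)) :=
  LinearIndependent.of_comp Phi li_phi_bmon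

lemma one_mem_span_bmon_aux : bmon (k := k) (d := d) (0, 0) = 1 := by
  rw [bmon, monomialT_zero, monomialD_zero, one_mul]

lemma span_bmon : Submodule.span k (Set.range (bmon (k := k) (d := d))) = ⊤ := by
  classical
  set S := Submodule.span k (Set.range (bmon (k := k) (d := d))) with hS
  rw [eq_top_iff]
  have hone : (1 : WeylAlgebra k d) ∈ S := by
    rw [← one_mem_span_bmon_aux]
    exact Submodule.subset_span ⟨(0, 0), rfl⟩
  have hbt : ∀ (q : (Fin d → ℕ) × (Fin d → ℕ)) (i : Fin d),
      bmon (k := k) q * t k d i ∈ S := by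
    rintro ⟨I, J⟩ i
    rw [bmon, mul_assoc, monomialD_mul_t, mul_add, ← mul_assoc, monomialT_mul_t, mul_smul_comm]
    exact S.add_mem (Submodule.subset_span ⟨(Function.update I i (I i + 1), J), rfl⟩)
      (S.smul_mem _ (Submodule.subset_span ⟨(I, Function.update J i (J i - 1)), rfl⟩))
  have hbd : ∀ (q : (Fin d → ℕ) × (Fin d → ℕ)) (i : Fin d),
      bmon (k := k) q * del k d i ∈ S := by
    rintro ⟨I, J⟩ i
    rw [bmon, mul_assoc, monomialD_mul_del]
    exact Submodule.subset_span ⟨(I, Function.update J i (J i + 1)), rfl⟩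
  have key : ∀ (s : WeylAlgebra k d), s ∈ S → ∀ (y : FreeAlgebra k (Fin d ⊕ Fin d)),
      s * RingQuot.mkAlgHom k (WeylRel k d) y ∈ S := by
    intro s hs y
    induction y using FreeAlgebra.induction generalizing s with
    | grade0 r =>
      rw [AlgHom.commutes, ← Algebra.commutes, ← Algebra.smul_def]
      exact S.smul_mem r hs
    | grade1 x =>
      rcases x with i | i
      · -- t generator
        have hmap : S.map (LinearMap.mulRight k (t k d i)) ≤ S := by
          rw [hS, Submodule.map_span, Submodule.span_le]
          rintro x ⟨y, ⟨q, rfl⟩, rfl⟩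
          exact hbt q i
        exact hmap ⟨s, hs, rfl⟩
      · have hmap : S.map (LinearMap.mulRight k (del k d i)) ≤ S := by
          rw [hS, Submodule.map_span, Submodule.span_le]
          rintro x ⟨y, ⟨q, rfl⟩, rfl⟩
          exact hbd q i
        exact hmap ⟨s, hs, rfl⟩
    | mul a b ha hb =>
      rw [map_mul, ← mul_assoc]
      exact hb _ (ha _ hs)
    | add a b ha hb =>
      rw [map_add, mul_add]
      exact S.add_mem (ha _ hs) (hb _ hs)
  intro w _
  obtain ⟨y, rfl⟩ := RingQuot.mkAlgHom_surjective k (WeylRel k d) w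
  simpa using key 1 hone y

lemma Phi_injective : Function.Injective (Phi (k := k) (d := d)) := by
  intro x y hxy
  have h0 : Phi (x - y) = 0 := by rw [map_sub, hxy, sub_self]
  have hx : x - y ∈ Submodule.span k (Set.range (bmon (k := k) (d := d))) := by
    rw [span_bmon]; trivial
  obtain ⟨c, hc⟩ := Finsupp.mem_span_range_iff_exists_finsupp.1 hx
  have : Finsupp.linearCombination k (⇑(Phi (k := k) (d := d)) ∘ bmon) c = 0 := by
    rw [← Finsupp.apply_linearCombination, show Finsupp.linearCombination k bmon c = x - y from
      by rw [Finsupp.linearCombination_apply]; exact hc, h0]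
  have hc0 : c = 0 := linearIndependent_iff.1 li_phi_bmon c this
  have : x - y = 0 := by rw [← hc, hc0]; simp
  exact sub_eq_zero.1 this

end WeylAlgebra
namespace WeylAlgebra

open MvPolynomial

variable {k : Type*} [CommRing k] {d : ℕ} {p : ℕ}

/-- The span of the monomials `t^I ∂^{pQ}`. -/
def SA (k : Type*) [CommRing k] (d p : ℕ) : Submodule k (WeylAlgebra k d) :=
  Submodule.span k
    (Set.range fun q : (Fin d → ℕ) × (Fin d → ℕ) => bmon (k := k) (q.1, p • q.2))

lemma commute_monomialDp_monomialT (hchar : (p : k) = 0) (Q I : Fin d → ℕ) :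
    Commute (monomialD k d (p • Q)) (monomialT k d I) := by
  rw [monomialT]
  refine Commute.list_prod_right _ _ fun y hy => ?_
  obtain ⟨r, _, rfl⟩ := List.mem_map.1 hy
  exact (commute_monomialDp_t hchar Q r).pow_right _

lemma bmon_p_mul (hchar : (p : k) = 0) (I Q I' Q' : Fin d → ℕ) :
    bmon (k := k) (I, p • Q) * bmon (k := k) (I', p • Q')
      = bmon (k := k) (I + I', p • (Q + Q')) := by
  rw [bmon, bmon, bmon, mul_assoc, ← mul_assoc (monomialD k d (p • Q)),
    (commute_monomialDp_monomialT hchar Q I').eq, mul_assoc, monomialD_mul_monomialD,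
    ← mul_assoc, monomialT_mul_monomialT, ← smul_add]

lemma one_mem_SA : (1 : WeylAlgebra k d) ∈ SA k d p := by
  have : bmon (k := k) (d := d) ((0 : Fin d → ℕ), p • (0 : Fin d → ℕ)) = 1 := by
    rw [smul_zero, bmon, monomialT_zero, monomialD_zero, one_mul]
  rw [← this]
  exact Submodule.subset_span ⟨(0, 0), rfl⟩

lemma mul_mem_SA (hchar : (p : k) = 0) {x y : WeylAlgebra k d}
    (hx : x ∈ SA k d p) (hy : y ∈ SA k d p) : x * y ∈ SA k d p := by
  have hle : SA k d p * SA k d p ≤ SA k d p := by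
    rw [SA, Submodule.span_mul_span, Submodule.span_le]
    rintro z ⟨x, ⟨q, rfl⟩, y, ⟨q', rfl⟩, rfl⟩
    show bmon (k := k) (q.1, p • q.2) * bmon (k := k) (q'.1, p • q'.2) ∈ _
    rw [bmon_p_mul hchar]
    exact Submodule.subset_span ⟨(q.1 + q'.1, q.2 + q'.2), rfl⟩
  exact hle (Submodule.mul_mem_mul hx hy)

lemma smul_single_eq (i : Fin d) : p • (Pi.single i 1 : Fin d → ℕ) = Pi.single i p := by
  funext r
  rcases eq_or_ne r i with rfl | h
  · simp
  · simp [Pi.single_eq_of_ne h]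

/-- The generating set of the centralizer. -/
def Agens (k : Type*) [CommRing k] (d p : ℕ) : Set (WeylAlgebra k d) :=
  (Set.range (t k d)) ∪ (Set.range fun i : Fin d => del k d i ^ p)

lemma mem_adjoin_iff_SA (hchar : (p : k) = 0) (x : WeylAlgebra k d) :
    x ∈ Algebra.adjoin k (Agens k d p) ↔ x ∈ SA k d p := by
  constructor
  · intro hx
    have hle : Algebra.adjoin k (Agens k d p) ≤
        Submodule.toSubalgebra (SA k d p) one_mem_SA (fun _ _ hx hy => mul_mem_SA hchar hx hy) := by
      apply Algebra.adjoin_le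
      rintro z (⟨i, rfl⟩ | ⟨i, rfl⟩)
      · have : bmon (k := k) (Pi.single i 1, p • (0 : Fin d → ℕ)) = t k d i := by
          rw [bmon, smul_zero, monomialD_zero, mul_one, monomialT_single i 1, pow_one]
        show _ ∈ SA k d p
        rw [← this]
        exact Submodule.subset_span ⟨(Pi.single i 1, 0), rfl⟩
      · have : bmon (k := k) ((0 : Fin d → ℕ), p • (Pi.single i 1 : Fin d → ℕ))
            = del k d i ^ p := by
          rw [bmon, monomialT_zero, one_mul, smul_single_eq, monomialD_single]
        show del k d i ^ p ∈ SA k d p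
        rw [← this]
        exact Submodule.subset_span ⟨(0, Pi.single i 1), rfl⟩
    exact hle hx
  · intro hx
    refine Submodule.span_induction
      (p := fun x _ => x ∈ Algebra.adjoin k (Agens k d p)) ?_ (zero_mem _)
      (fun x y _ _ hx hy => add_mem hx hy)
      (fun a x _ hx => Subalgebra.smul_mem _ hx a) hx
    rintro z ⟨q, rfl⟩
    show bmon (k := k) (q.1, p • q.2) ∈ Algebra.adjoin k (Agens k d p)
    rw [bmon]
    refine Subalgebra.mul_mem _ ?_ ?_
    · rw [monomialT]
      refine Subalgebra.list_prod_mem _ fun y hy => ?_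
      obtain ⟨r, _, rfl⟩ := List.mem_map.1 hy
      have hmem : t k d r ∈ Agens k d p := Set.mem_union_left _ ⟨r, rfl⟩
      exact pow_mem (Algebra.subset_adjoin hmem) _
    · rw [monomialD]
      refine Subalgebra.list_prod_mem _ fun y hy => ?_
      obtain ⟨r, _, rfl⟩ := List.mem_map.1 hy
      have : del k d r ^ (p • q.2) r = (del k d r ^ p) ^ q.2 r := by
        rw [Pi.smul_apply, smul_eq_mul, pow_mul]
      rw [this]
      have hmem : del k d r ^ p ∈ Agens k d p := Set.mem_union_right _ ⟨r, rfl⟩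
      exact pow_mem (Algebra.subset_adjoin hmem) _

/-- Polynomials all of whose `y`-exponents are divisible by `p`. -/
def Vp (k : Type*) [CommRing k] (d p : ℕ) : Submodule k (Poly k d) where
  carrier := {f | ∀ u : (Fin d ⊕ Fin d) →₀ ℕ, (∃ i, ¬ (p ∣ u (Sum.inr i))) → coeff u f = 0}
  add_mem' := fun hf hg u hu => by rw [coeff_add, hf u hu, hg u hu, add_zero]
  zero_mem' := fun u _ => coeff_zero u
  smul_mem' := fun c f hf u hu => by rw [coeff_smul, hf u hu, smul_zero]

lemma expo_apply_inl (I J : Fin d → ℕ) (r : Fin d) : expo I J (Sum.inl r) = I r := rfl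

lemma expo_apply_inr (I J : Fin d → ℕ) (r : Fin d) : expo I J (Sum.inr r) = J r := rfl

lemma Phi_mem_Vp_of_SA {x : WeylAlgebra k d} (hx : x ∈ SA k d p) : Phi x ∈ Vp k d p := by
  refine Submodule.span_induction ?_ (by rw [map_zero]; exact (Vp k d p).zero_mem)
    (fun x y _ _ hx hy => by rw [map_add]; exact (Vp k d p).add_mem hx hy)
    (fun a x _ hx => by rw [map_smul]; exact (Vp k d p).smul_mem a hx) hx
  rintro z ⟨q, rfl⟩
  rw [Phi_bmon]
  intro u hu
  classical
  rw [coeff_monomial]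
  split
  · next heq =>
    obtain ⟨i, hi⟩ := hu
    exfalso
    apply hi
    rw [← heq, expo_apply_inr]
    exact Dvd.intro (q.2 i) rfl
  · rfl

/-- `Ymon J = ∏ y_r^{J r}`. -/
def Ymon (J : Fin d → ℕ) : Poly k d := ∏ r : Fin d, (X (Sum.inr r) : Poly k d) ^ J r

lemma Phi_monomialD (J : Fin d → ℕ) : Phi (monomialD k d J) = Ymon J :=
  rho_monomialD_one J

lemma noX_Ymon (J : Fin d → ℕ) : NoX (Ymon (k := k) (d := d) J) := by
  have : Ymon (k := k) (d := d) J
      = ((List.finRange d).map fun r => (X (Sum.inr r) : Poly k d) ^ J r).prod * 1 := by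
    rw [mul_one, Ymon, Fin.prod_univ_def]
  rw [this]
  exact noX_Yprod_mul noX_one J _

lemma Ymon_eq_monomial (J : Fin d → ℕ) :
    Ymon (k := k) (d := d) J = monomial (expo 0 J) 1 := by
  have h1 : bmon (k := k) ((0 : Fin d → ℕ), J) = monomialD k d J := by
    rw [bmon, monomialT_zero, one_mul]
  rw [← Phi_monomialD, ← h1, Phi_bmon]

lemma rho_monomialD_apply (J : Fin d → ℕ) {g : Poly k d} (hg : NoX g) :
    rho (monomialD k d J) g
      = ((List.finRange d).map fun r => (X (Sum.inr r) : Poly k d) ^ J r).prod * g := by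
  rw [monomialD, map_list_prod]
  have : (List.map (⇑rho) (List.map (fun i => del k d i ^ J i) (List.finRange d)))
      = (List.finRange d).map fun r => DD (k := k) r ^ J r := by
    rw [List.map_map]
    exact List.map_congr_left fun r _ => by simp [map_pow, rho_del]
  rw [this, prod_DD_apply_noX J _ hg]

lemma rho_bmon_apply (q : (Fin d → ℕ) × (Fin d → ℕ)) {g : Poly k d} (hg : NoX g) :
    rho (bmon (k := k) q) g = Phi (bmon (k := k) q) * g := by
  have hgen : ∀ (g : Poly k d), NoX g → rho (bmon (k := k) q) g
      = (∏ r : Fin d, (X (Sum.inl r) : Poly k d) ^ q.1 r) *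
        (((List.finRange d).map fun r => (X (Sum.inr r) : Poly k d) ^ q.2 r).prod * g) := by
    intro g hg
    rw [bmon, map_mul, Module.End.mul_apply, rho_monomialD_apply q.2 hg, rho_monomialT]
  rw [hgen g hg, show Phi (bmon (k := k) q) = rho (bmon (k := k) q) 1 from rfl,
    hgen 1 noX_one]
  ring

lemma rho_SA_apply {x : WeylAlgebra k d} (hx : x ∈ SA k d p) {g : Poly k d} (hg : NoX g) :
    rho x g = Phi x * g := by
  refine Submodule.span_induction ?_ (by rw [map_zero]; simp)
    (fun a b _ _ ha hb => by
      rw [map_add, map_add, LinearMap.add_apply, ha, hb, add_mul])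
    (fun c a _ ha => by
      rw [map_smul, map_smul, LinearMap.smul_apply, ha, smul_mul_assoc]) hx
  rintro z ⟨q, rfl⟩
  exact rho_bmon_apply _ hg

/-- The key linear-independence lemma over the subalgebra of `t`'s and `∂^p`'s. -/
lemma key_unique (hp : p.Prime) (hchar : (p : k) = 0)
    {ι : Type*} [Fintype ι] (e : ι → Fin d → ℕ) (he : ∀ x i, e x i < p)
    (hinj : Function.Injective e) (a : ι → WeylAlgebra k d) (ha : ∀ x, a x ∈ SA k d p)
    (hsum : ∑ x, a x * monomialD k d (e x) = 0) (x0 : ι) : a x0 = 0 := by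
  classical
  have hPhi : ∑ x, Phi (a x) * (monomial (expo 0 (e x)) (1 : k)) = 0 := by
    have h0 : Phi (∑ x, a x * monomialD k d (e x)) = 0 := by rw [hsum, map_zero]
    rw [map_sum] at h0
    rw [← h0]
    refine Finset.sum_congr rfl fun x _ => ?_
    rw [Phi_mul, show Phi (monomialD k d (e x)) = Ymon (e x) from Phi_monomialD _,
      rho_SA_apply (ha x) (noX_Ymon (e x)), Ymon_eq_monomial]
  have hgoal : Phi (a x0) = 0 := by
    apply MvPolynomial.ext
    intro u
    rw [coeff_zero]
    by_cases hu : ∃ i, ¬ p ∣ u (Sum.inr i)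
    · exact Phi_mem_Vp_of_SA (ha x0) u hu
    · push_neg at hu
      have h3 : ∑ x, coeff (u + expo 0 (e x0)) (Phi (a x) * monomial (expo 0 (e x)) (1 : k))
          = 0 := by
        rw [← coeff_sum, hPhi, coeff_zero]
      have h4 : ∀ x ∈ Finset.univ, x ≠ x0 →
          coeff (u + expo 0 (e x0)) (Phi (a x) * monomial (expo 0 (e x)) (1 : k)) = 0 := by
        intro x _ hx
        rw [coeff_mul_monomial']
        split
        · next hle =>
          rw [mul_one]
          apply Phi_mem_Vp_of_SA (ha x)
          obtain ⟨i, hi⟩ := Function.ne_iff.1 (fun h => hx (hinj h))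
          refine ⟨i, fun hdvd => hi ?_⟩
          have hle_i : e x i ≤ u (Sum.inr i) + e x0 i := by
            have := Finsupp.le_def.1 hle (Sum.inr i)
            simpa [Finsupp.add_apply, expo_apply_inr] using this
          have hval : (u + expo 0 (e x0) - expo 0 (e x)) (Sum.inr i)
              = u (Sum.inr i) + e x0 i - e x i := by
            rw [Finsupp.tsub_apply, Finsupp.add_apply, expo_apply_inr, expo_apply_inr]
          rw [hval] at hdvd
          obtain ⟨av, hav⟩ := hdvd
          obtain ⟨bv, hbv⟩ := hu i
          have hsum2 : p * av + e x i = p * bv + e x0 i := by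
            rw [← hav, ← hbv, Nat.sub_add_cancel hle_i, hbv]
          have hmod : e x i % p = e x0 i % p := by
            have := congrArg (· % p) hsum2
            simpa [Nat.mul_add_mod] using this
          rwa [Nat.mod_eq_of_lt (he x i), Nat.mod_eq_of_lt (he x0 i)] at hmod
        · rfl
      have h5 := Finset.sum_eq_single_of_mem x0 (Finset.mem_univ x0) h4
      rw [h5, coeff_mul_monomial', if_pos le_add_self, mul_one, add_tsub_cancel_right] at h3
      exact h3
  have := Phi_injective (k := k) (d := d)
  have h6 : Phi (a x0) = Phi 0 := by rw [hgoal, map_zero]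
  exact this h6

end WeylAlgebra
namespace WeylAlgebra

open MvPolynomial

variable {k : Type*} [CommRing k] {d : ℕ} {p : ℕ}

lemma smul_cancel (hp : p.Prime) (hchar : (p : k) = 0) {n : ℕ} (hn : ¬ p ∣ n)
    {y : WeylAlgebra k d} (h : n • y = 0) : y = 0 := by
  have hcop : Nat.Coprime n p := ((Nat.Prime.coprime_iff_not_dvd hp).2 hn).symm
  have hb := Nat.gcd_eq_gcd_ab n p
  rw [hcop] at hb
  have h1k : (1 : k) = (Nat.gcdA n p : k) * (n : k) := by
    have h2 := congrArg (fun z : ℤ => ((z : ℤ) : k)) hb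
    push_cast at h2
    rw [hchar, zero_mul, add_zero] at h2
    rw [h2]
    ring
  calc y = (1 : k) • y := (one_smul k y).symm
    _ = (Nat.gcdA n p : k) • ((n : k) • y) := by rw [h1k, mul_smul]
    _ = (Nat.gcdA n p : k) • (n • y) := by rw [Nat.cast_smul_eq_nsmul]
    _ = 0 := by rw [h, smul_zero]

lemma exists_decomposition (hp : p.Prime) (hchar : (p : k) = 0) (w : WeylAlgebra k d) :
    ∃ c : (Fin d → Fin p) → Algebra.adjoin k (Agens k d p),
      w = ∑ J : Fin d → Fin p,
        (c J : WeylAlgebra k d) * monomialD k d fun i => (J i : ℕ) := by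
  classical
  let A := Algebra.adjoin k (Agens k d p)
  let M : Submodule k (WeylAlgebra k d) :=
    { carrier := {w | ∃ c : (Fin d → Fin p) → A,
        w = ∑ J : Fin d → Fin p,
          (c J : WeylAlgebra k d) * monomialD k d fun i => (J i : ℕ)}
      add_mem' := by
        rintro x y ⟨c, rfl⟩ ⟨c', rfl⟩
        refine ⟨c + c', ?_⟩
        rw [← Finset.sum_add_distrib]
        exact Finset.sum_congr rfl fun J _ => by
          rw [Pi.add_apply, Subalgebra.coe_add, add_mul]
      zero_mem' := ⟨0, by simp⟩
      smul_mem' := by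
        rintro a x ⟨c, rfl⟩
        refine ⟨a • c, ?_⟩
        rw [Finset.smul_sum]
        exact Finset.sum_congr rfl fun J _ => by
          rw [Pi.smul_apply, Subalgebra.coe_smul, smul_mul_assoc] }
  have hbmonM : ∀ q : (Fin d → ℕ) × (Fin d → ℕ), bmon (k := k) q ∈ M := by
    rintro ⟨I, J⟩
    let Q : Fin d → ℕ := fun r => J r / p
    let R : Fin d → Fin p := fun r => ⟨J r % p, Nat.mod_lt _ hp.pos⟩
    have hA : bmon (k := k) (I, p • Q) ∈ A :=
      (mem_adjoin_iff_SA hchar _).2 (Submodule.subset_span ⟨(I, Q), rfl⟩)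
    have hsplit : monomialD k d J
        = monomialD k d (p • Q) * monomialD k d (fun r => (R r : ℕ)) := by
      rw [monomialD_mul_monomialD]
      congr 1
      funext r
      show J r = p * (J r / p) + J r % p
      rw [Nat.div_add_mod]
    refine ⟨fun S => if S = R then (⟨bmon (k := k) (I, p • Q), hA⟩ : A) else 0, ?_⟩
    have hsum : ∑ S : Fin d → Fin p,
        ((if S = R then (⟨bmon (k := k) (I, p • Q), hA⟩ : A) else 0 : A) : WeylAlgebra k d)
          * monomialD k d (fun i => (S i : ℕ))
        = bmon (k := k) (I, p • Q) * monomialD k d (fun r => (R r : ℕ)) := by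
      rw [show (∑ S : Fin d → Fin p,
          ((if S = R then (⟨bmon (k := k) (I, p • Q), hA⟩ : A) else 0 : A) : WeylAlgebra k d)
            * monomialD k d (fun i => (S i : ℕ)))
          = ∑ S : Fin d → Fin p, (if S = R then
              bmon (k := k) (I, p • Q) * monomialD k d (fun i => (S i : ℕ)) else 0) from
        Finset.sum_congr rfl fun S _ => by split <;> simp_all]
      rw [Finset.sum_ite_eq' Finset.univ R]
      simp
    rw [hsum, bmon, bmon, mul_assoc, ← hsplit]
  have htop : (⊤ : Submodule k (WeylAlgebra k d)) ≤ M := by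
    rw [← span_bmon, Submodule.span_le]
    rintro x ⟨q, rfl⟩
    exact hbmonM q
  exact htop (Submodule.mem_top) 

lemma commute_of_forall_gens {g : WeylAlgebra k d} {S : Set (WeylAlgebra k d)}
    (h : ∀ s ∈ S, Commute g s) {x : WeylAlgebra k d}
    (hx : x ∈ Algebra.adjoin k S) : Commute g x := by
  induction hx using Algebra.adjoin_induction with
  | mem x hx => exact h x hx
  | algebraMap r => exact (Algebra.commutes r g).symm
  | add x y _ _ hx hy => exact hx.add_right hy
  | mul x y _ _ hx hy => exact hx.mul_right hy

lemma commute_t_mem_adjoin (hchar : (p : k) = 0) (i : Fin d) {x : WeylAlgebra k d}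
    (hx : x ∈ Algebra.adjoin k (Agens k d p)) : Commute (t k d i) x := by
  refine commute_of_forall_gens (fun s hs => ?_) hx
  rcases hs with ⟨j, rfl⟩ | ⟨j, rfl⟩
  · exact commute_t_t i j
  · exact (commute_del_pow_p_t hchar j i).symm

lemma coeffs_unique (hp : p.Prime) (hchar : (p : k) = 0)
    (a : (Fin d → Fin p) → WeylAlgebra k d)
    (ha : ∀ J, a J ∈ Algebra.adjoin k (Agens k d p))
    (hsum : ∑ J : Fin d → Fin p, a J * monomialD k d (fun i => (J i : ℕ)) = 0)
    (J : Fin d → Fin p) : a J = 0 := by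
  refine key_unique hp hchar (fun J : Fin d → Fin p => fun i => (J i : ℕ))
    (fun J i => (J i).isLt) ?_ a (fun J => (mem_adjoin_iff_SA hchar _).1 (ha J)) hsum J
  intro x y h
  funext i
  exact Fin.ext (congrFun h i)

lemma centralizer_le (hp : p.Prime) (hchar : (p : k) = 0) (w : WeylAlgebra k d)
    (hw : w ∈ Subalgebra.centralizer k
      ((Algebra.adjoin k (Set.range (t k d)) : Subalgebra k (WeylAlgebra k d)) :
        Set (WeylAlgebra k d))) : w ∈ Algebra.adjoin k (Agens k d p) := by
  classical
  obtain ⟨c, hc⟩ := exists_decomposition hp hchar w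
  have hcomm : ∀ i : Fin d, t k d i * w = w * t k d i := fun i =>
    (Subalgebra.mem_centralizer_iff k).1 hw (t k d i) (Algebra.subset_adjoin ⟨i, rfl⟩)
  have hzero : ∀ (i : Fin d) (J : Fin d → Fin p), (J i : ℕ) ≠ 0 → c J = 0 := by
    intro i J0 hJ0
    -- the commutator relation
    have h1 : w * t k d i = ∑ J : Fin d → Fin p,
        ((c J : WeylAlgebra k d) * (t k d i * monomialD k d (fun r => (J r : ℕ)))
          + (J i : ℕ) • ((c J : WeylAlgebra k d) *
            monomialD k d (Function.update (fun r => (J r : ℕ)) i ((J i : ℕ) - 1)))) := by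
      rw [hc, Finset.sum_mul]
      refine Finset.sum_congr rfl fun J _ => ?_
      rw [mul_assoc, monomialD_mul_t, mul_add, mul_smul_comm]
    have h2 : t k d i * w = ∑ J : Fin d → Fin p,
        (c J : WeylAlgebra k d) * (t k d i * monomialD k d (fun r => (J r : ℕ))) := by
      rw [hc, Finset.mul_sum]
      refine Finset.sum_congr rfl fun J _ => ?_
      rw [← mul_assoc, (commute_t_mem_adjoin hchar i (c J).2).eq, mul_assoc]
    have hrel : ∑ J : Fin d → Fin p,
        (J i : ℕ) • ((c J : WeylAlgebra k d) *
          monomialD k d (Function.update (fun r => (J r : ℕ)) i ((J i : ℕ) - 1))) = 0 := by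
      have h3 := (h2.symm.trans (hcomm i)).trans h1
      rw [Finset.sum_add_distrib] at h3
      exact (left_eq_add.1 h3)
    -- restrict to the subtype of nonvanishing indices
    have hfil : ∑ J ∈ Finset.univ.filter (fun J : Fin d → Fin p => (J i : ℕ) ≠ 0),
        (J i : ℕ) • ((c J : WeylAlgebra k d) *
          monomialD k d (Function.update (fun r => (J r : ℕ)) i ((J i : ℕ) - 1))) = 0 := by
      rw [Finset.sum_filter_of_ne, hrel]
      intro J _ hne
      by_contra h0
      rw [h0, zero_smul] at hne
      exact hne rfl
    have hsub : ∑ x : {J : Fin d → Fin p // (J i : ℕ) ≠ 0},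
        ((x.1 i : ℕ) • (c x.1 : WeylAlgebra k d)) *
          monomialD k d (Function.update (fun r => (x.1 r : ℕ)) i ((x.1 i : ℕ) - 1)) = 0 := by
      rw [← hfil, Finset.sum_subtype (p := fun J : Fin d → Fin p => (J i : ℕ) ≠ 0)
        (Finset.univ.filter (fun J : Fin d → Fin p => (J i : ℕ) ≠ 0)) (fun J => by simp)
        (fun J : Fin d → Fin p => (J i : ℕ) • ((c J : WeylAlgebra k d) *
          monomialD k d (Function.update (fun r => (J r : ℕ)) i ((J i : ℕ) - 1))))]
      exact Finset.sum_congr rfl fun x _ => (smul_mul_assoc _ _ _)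
    have hkey := key_unique hp hchar
      (e := fun x : {J : Fin d → Fin p // (J i : ℕ) ≠ 0} =>
        Function.update (fun r => (x.1 r : ℕ)) i ((x.1 i : ℕ) - 1))
      (he := ?_) (hinj := ?_)
      (a := fun x => (x.1 i : ℕ) • (c x.1 : WeylAlgebra k d))
      (ha := ?_) (hsum := hsub) ⟨J0, hJ0⟩
    · have : (J0 i : ℕ) • (c J0 : WeylAlgebra k d) = 0 := hkey
      have hnd : ¬ p ∣ (J0 i : ℕ) := by
        intro hdvd
        exact hJ0 (Nat.eq_zero_of_dvd_of_lt hdvd (J0 i).isLt)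
      have := smul_cancel hp hchar hnd this
      exact Subtype.ext this
    · intro x r
      rcases eq_or_ne r i with rfl | h
      · simp only [Function.update_self]
        exact lt_of_le_of_lt (Nat.sub_le _ _) (x.1 r).isLt
      · simp only [Function.update_of_ne h]
        exact (x.1 r).isLt
    · intro x y h
      refine Subtype.ext (funext fun r => ?_)
      rcases eq_or_ne r i with rfl | hr
      · have h1 := congrFun h r
        simp only [Function.update_self] at h1
        have hx1 : 1 ≤ (x.1 r : ℕ) := Nat.one_le_iff_ne_zero.2 x.2
        have hy1 : 1 ≤ (y.1 r : ℕ) := Nat.one_le_iff_ne_zero.2 y.2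
        exact Fin.ext (by omega)
      · have h1 := congrFun h r
        simp only [Function.update_of_ne hr] at h1
        exact Fin.ext h1
    · intro x
      exact nsmul_mem ((mem_adjoin_iff_SA hchar _).1 (c x.1).2) _
  -- conclude
  let J0 : Fin d → Fin p := fun _ => (⟨0, hp.pos⟩ : Fin p)
  have hw0 : w = (c J0 : WeylAlgebra k d) * monomialD k d (fun r => ((J0 r : ℕ))) := by
    rw [hc]
    refine Finset.sum_eq_single J0 ?_ (fun h => absurd (Finset.mem_univ J0) h)
    intro J _ hJ
    obtain ⟨i, hi⟩ := Function.ne_iff.1 hJ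
    have : (J i : ℕ) ≠ 0 := by
      intro h0
      exact hi (Fin.ext h0)
    rw [hzero i J this, ZeroMemClass.coe_zero, zero_mul]
  rw [hw0, show monomialD k d (fun r => ((J0 r : ℕ))) = 1 from monomialD_zero, mul_one]
  exact (c J0).2

end WeylAlgebra

open WeylAlgebra in
/-- In characteristic `p`, the centralizer `A` of `k[t_1,…,t_d]` in the `d`-th Weyl algebra
`W` is the `k`-subalgebra generated by `t_1,…,t_d,∂_1^p,…,∂_d^p`, and `W` is a free left
`A`-module of rank `p^d` with basis the monomials `∂^J` with exponents in `{0,…,p−1}`. -/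
theorem weylAlgebra_centralizer_and_free (p : ℕ) (hp : p.Prime)
    (k : Type*) [CommRing k] (hchar : (p : k) = 0) (d : ℕ) (hd : 1 ≤ d) :
    Subalgebra.centralizer k
        ((Algebra.adjoin k (Set.range (t k d)) : Subalgebra k (WeylAlgebra k d)) :
          Set (WeylAlgebra k d)) =
      Algebra.adjoin k
        ((Set.range (t k d)) ∪ (Set.range fun i : Fin d => del k d i ^ p)) ∧
    ∀ w : WeylAlgebra k d,
      ∃! c : (Fin d → Fin p) →
          Algebra.adjoin k
            ((Set.range (t k d)) ∪ (Set.range fun i : Fin d => del k d i ^ p)),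
        w = ∑ J : Fin d → Fin p,
          (c J : WeylAlgebra k d) * monomialD k d fun i => (J i : ℕ) := by
  constructor
  · apply le_antisymm
    · intro w hw
      exact centralizer_le hp hchar w hw
    · intro z hz
      rw [Subalgebra.mem_centralizer_iff]
      intro g hg
      have hcz : Commute z g := by
        refine commute_of_forall_gens (fun s hs => ?_) hg
        obtain ⟨j, rfl⟩ := hs
        have hz' : z ∈ Algebra.adjoin k (Agens k d p) := hz
        exact (commute_t_mem_adjoin hchar j hz').symm
      exact hcz.symm.eq
  · intro w
    obtain ⟨c, hc⟩ := exists_decomposition hp hchar w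
    refine ⟨c, hc, ?_⟩
    intro c' hc'
    funext J
    have hsum0 : ∑ J : Fin d → Fin p,
        ((c' J : WeylAlgebra k d) - (c J : WeylAlgebra k d))
          * monomialD k d (fun i => (J i : ℕ)) = 0 := by
      have : ∑ J : Fin d → Fin p,
          ((c' J : WeylAlgebra k d) - (c J : WeylAlgebra k d))
            * monomialD k d (fun i => (J i : ℕ))
          = (∑ J : Fin d → Fin p,
              (c' J : WeylAlgebra k d) * monomialD k d (fun i => (J i : ℕ)))
            - ∑ J : Fin d → Fin p,
              (c J : WeylAlgebra k d) * monomialD k d (fun i => (J i : ℕ)) := by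
        rw [← Finset.sum_sub_distrib]
        exact Finset.sum_congr rfl fun J _ => sub_mul _ _ _
      rw [this, ← hc, ← hc', sub_self]
    have hzero := coeffs_unique hp hchar
      (fun J => (c' J : WeylAlgebra k d) - (c J : WeylAlgebra k d))
      (fun J => sub_mem (c' J).2 (c J).2) hsum0 J
    exact Subtype.ext (sub_eq_zero.1 hzero)
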